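/- Let N be a positive integer, Λ ⊂ ℝ a nonempty closed bounded set with minimum λ_min, and L_1, ..., L_{N+1} exchangeable random functions from Λ to ℝ that are almost surely left-continuous and monotone in λ (each may be either nondecreasing or nonincreasing). Let B : Λ → ℝ be left-continuous and monotone with, for each i, almost surely L_i(λ) ≤ B(λ) for all λ ∈ Λ. Let φ_base : ℝ → ℝ be a real-valued OCE disutility function, define φ(x) := φ_base(max{x,0}), and let R be the OCE risk measure with disutility φ, i.e., R[X] = inf_{s∈ℝ} (s + E[φ(X − s)]). Fix α ∈ ℝ and t ∈ [B(λ_min), α]. Define L̃_{i,t}(λ) := t + φ(L_i(λ) − t), B̃_t(λ) := t + φ(B(λ) − t), h̃_t(λ) := (1/(N+1)) (B̃_t(λ) + Σ_{i=1}^N L̃_{i,t}(λ)), and Λ̂_t := {λ ∈ Λ : h̃_t(λ) ≤ α}. Then for any measurable random variable λ̂ taking values in Λ with λ̂ ∈ Λ̂_t almost surely, R[L_{N+1}(λ̂)] ≤ α, assuming all relevant expectations exist. -/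

import Mathlib

open MeasureTheory Set

/-- **Conformal OCE risk control for monotone losses (Proposition B.4).**
With exchangeable losses that are a.s. left-continuous and *monotone* (each either
nondecreasing or nonincreasing) on `Λ`, `B` left-continuous and monotone with
`L i ≤ B` a.s. pointwise on `Λ`, a real-valued OCE disutility `φ_base`, the transformed
disutility `φ(x) = φ_base(max x 0)`, and `t ∈ [B(λ_min), α]`, define
`h̃_t ω λ = ((t + φ(B λ - t)) + ∑_{i<N} (t + φ(L i ω λ - t)))/(N+1)`.
Any measurable `lamHat` valued in `Λ` with `h̃_t ω (lamHat ω) ≤ α` a.s. satisfies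
`R[L_{N+1}(lamHat)] = ⨅ s, (s + E[φ_base(max (L_{N+1}(lamHat) - s) 0)]) ≤ α`. -/
theorem stmt_5
    {Ω : Type*} [MeasurableSpace Ω] (ℙ : Measure Ω) [IsProbabilityMeasure ℙ]
    (N : ℕ) (hN : 0 < N)
    (Λ : Set ℝ) (hΛne : Λ.Nonempty) (hΛclosed : IsClosed Λ)
    (hΛbdd : Bornology.IsBounded Λ)
    (lamMin : ℝ) (hMin : IsLeast Λ lamMin)
    (L : Fin (N + 1) → Ω → ℝ → ℝ)
    (hLmeas : ∀ i, Measurable fun ω => L i ω)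
    (hExch : ∀ σ : Equiv.Perm (Fin (N + 1)),
      Measure.map (fun ω => fun i => L (σ i) ω) ℙ
        = Measure.map (fun ω => fun i => L i ω) ℙ)
    (hLleftCont : ∀ i, ∀ᵐ ω ∂ℙ, ∀ lam ∈ Λ,
      ContinuousWithinAt (L i ω) (Λ ∩ Iic lam) lam)
    (hLmono : ∀ i, ∀ᵐ ω ∂ℙ, MonotoneOn (L i ω) Λ ∨ AntitoneOn (L i ω) Λ)
    (B : ℝ → ℝ)
    (hBleftCont : ∀ lam ∈ Λ, ContinuousWithinAt B (Λ ∩ Iic lam) lam)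
    (hBmono : MonotoneOn B Λ ∨ AntitoneOn B Λ)
    (hLB : ∀ i, ∀ᵐ ω ∂ℙ, ∀ lam ∈ Λ, L i ω lam ≤ B lam)
    (φbase : ℝ → ℝ)
    (hφmono : Monotone φbase) (hφconv : ConvexOn ℝ univ φbase)
    (hφlsc : LowerSemicontinuous φbase) (hφ0 : φbase 0 = 0)
    (hφsub : ∀ x : ℝ, x ≤ φbase x)
    (α t : ℝ) (ht : t ∈ Icc (B lamMin) α)
    (htilde : Ω → ℝ → ℝ)
    (hdef : ∀ ω lam, htilde ω lam =
      ((t + φbase (max (B lam - t) 0))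
        + ∑ i : Fin N, (t + φbase (max (L i.castSucc ω lam - t) 0))) / (N + 1))
    (lamHat : Ω → ℝ) (hlamHatMeas : Measurable lamHat)
    (hlamHatΛ : ∀ᵐ ω ∂ℙ, lamHat ω ∈ Λ)
    (hlamHatIn : ∀ᵐ ω ∂ℙ, htilde ω (lamHat ω) ≤ α)
    (hInt : Integrable (fun ω => L (Fin.last N) ω (lamHat ω)) ℙ)
    (hIntφ : ∀ s : ℝ,
      Integrable (fun ω => φbase (max (L (Fin.last N) ω (lamHat ω) - s) 0)) ℙ) :
    (⨅ s : ℝ,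
      (s + ∫ ω, φbase (max (L (Fin.last N) ω (lamHat ω) - s) 0) ∂ℙ)) ≤ α := by
  classical
  obtain ⟨hBt, htα⟩ := ht
  have hlamMinΛ : lamMin ∈ Λ := hMin.1
  set phi : ℝ → ℝ := fun x => φbase (max (x - t) 0) with hphi
  have hphimono : Monotone phi := fun x y hxy =>
    hφmono (max_le_max (sub_le_sub_right hxy t) le_rfl)
  have hphicont : Continuous phi :=
    (hφconv.locallyLipschitz.continuous).comp (by continuity)
  have hphizero : ∀ x ≤ t, phi x = 0 := by
    intro x hx
    have : max (x - t) 0 = 0 := max_eq_right (by linarith)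
    simp [hphi, this, hφ0]
  have hphinn : ∀ x, 0 ≤ phi x := fun x =>
    le_trans (le_max_right _ _) (hφsub _)
  set b : ℝ → ℝ := fun lam => phi (B lam) with hb
  set K : ℝ := ((N : ℝ) + 1) * (α - t) with hK
  have hK0 : 0 ≤ K := by
    have : (0:ℝ) ≤ (N:ℝ) + 1 := by positivity
    exact mul_nonneg this (by linarith)
  -- the countable "left approximation" family
  set p : ℚ → ℝ := fun q =>
    if h : (Λ ∩ Ici (q : ℝ)).Nonempty then sInf (Λ ∩ Ici (q : ℝ)) else lamMin with hp
  have hpΛ : ∀ q, p q ∈ Λ := by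
    intro q
    simp only [hp]
    split_ifs with h
    · exact ((hΛclosed.inter isClosed_Ici).csInf_mem h ⟨q, fun x hx => hx.2⟩).1
    · exact hlamMinΛ
  have hp_approx : ∀ lam ∈ Λ, ∀ ε > (0:ℝ), ∃ q : ℚ, p q ≤ lam ∧ lam - ε < p q := by
    intro lam hlam ε hε
    obtain ⟨q, hq1, hq2⟩ := exists_rat_btwn (show lam - ε < lam by linarith)
    have hne : (Λ ∩ Ici (q : ℝ)).Nonempty := ⟨lam, hlam, le_of_lt hq2⟩
    have hbdd : BddBelow (Λ ∩ Ici (q : ℝ)) := ⟨q, fun x hx => hx.2⟩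
    have hmem := (hΛclosed.inter isClosed_Ici).csInf_mem hne hbdd
    have hle : sInf (Λ ∩ Ici (q : ℝ)) ≤ lam := csInf_le hbdd ⟨hlam, le_of_lt hq2⟩
    refine ⟨q, ?_, ?_⟩
    · simp only [hp]; rw [dif_pos hne]; exact hle
    · simp only [hp]; rw [dif_pos hne]; exact lt_of_lt_of_le hq1 hmem.2
  -- MonotoneOn b
  have hbmono : MonotoneOn b Λ := by
    rcases hBmono with hm | ha
    · exact fun x hx y hy hxy => hphimono (hm hx hy hxy)
    · have hz : ∀ lam ∈ Λ, b lam = 0 := by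
        intro lam hlam
        exact hphizero _ (le_trans (ha hlamMinΛ hlam (hMin.2 hlam)) hBt)
      intro x hx y hy _
      rw [hz x hx, hz y hy]
  -- the symmetrized functionals
  set c : (Fin (N + 1) → ℝ → ℝ) → Fin (N + 1) → ℝ → ℝ := fun f j lam =>
    if b lam + ((∑ i, phi (f i lam)) - phi (f j lam)) ≤ K then phi (f j lam) else 0
    with hc
  set G : Fin (N + 1) → (Fin (N + 1) → ℝ → ℝ) → ℝ := fun j f => ⨆ q : ℚ, c f j (p q)
    with hG
  set T : Ω → Fin (N + 1) → ℝ → ℝ := fun ω i => L i ω with hT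
  have hTmeas : Measurable T := measurable_pi_lambda _ fun i => hLmeas i
  have hphimeas : Measurable phi := hphicont.measurable
  have hevalmeas : ∀ (j : Fin (N + 1)) (lam : ℝ),
      Measurable fun f : Fin (N + 1) → ℝ → ℝ => phi (f j lam) := fun j lam =>
    hphimeas.comp ((measurable_pi_apply lam).comp (measurable_pi_apply j))
  have hcmeas : ∀ (j : Fin (N + 1)) (lam : ℝ), Measurable fun f => c f j lam := by
    intro j lam
    simp only [hc]
    have hcond : MeasurableSet {f : Fin (N + 1) → ℝ → ℝ |
        b lam + ((∑ i, phi (f i lam)) - phi (f j lam)) ≤ K} := by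
      apply measurableSet_le _ measurable_const
      exact measurable_const.add
        ((Finset.measurable_sum Finset.univ fun i _ => hevalmeas i lam).sub (hevalmeas j lam))
    exact Measurable.ite hcond (hevalmeas j lam) measurable_const
  have hGmeas : ∀ j, Measurable (G j) := by
    intro j
    simp only [hG]
    exact Measurable.iSup fun q => hcmeas j (p q)
  have hcnn : ∀ f j lam, 0 ≤ c f j lam := by
    intro f j lam
    simp only [hc]
    split_ifs
    · exact hphinn _
    · exact le_rfl
  -- the almost sure good event and its consequences
  have hmain : ∀ᵐ ω ∂ℙ, (∀ j, 0 ≤ G j (T ω) ∧ G j (T ω) ≤ K) ∧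
      (∑ j, G j (T ω)) ≤ K ∧
      phi (L (Fin.last N) ω (lamHat ω)) ≤ G (Fin.last N) (T ω) := by
    filter_upwards [ae_all_iff.2 hLmono, ae_all_iff.2 hLB, hLleftCont (Fin.last N),
      hlamHatΛ, hlamHatIn] with ω h1 h2 h3 h4 h5
    -- pointwise monotonicity of the transformed losses
    have hgmono : ∀ i, MonotoneOn (fun lam => phi (L i ω lam)) Λ := by
      intro i
      rcases h1 i with hm | ha
      · exact fun x hx y hy hxy => hphimono (hm hx hy hxy)
      · have hz : ∀ lam ∈ Λ, phi (L i ω lam) = 0 := by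
          intro lam hlam
          refine hphizero _ ?_
          calc L i ω lam ≤ L i ω lamMin := ha hlamMinΛ hlam (hMin.2 hlam)
            _ ≤ B lamMin := h2 i lamMin hlamMinΛ
            _ ≤ t := hBt
        intro x hx y hy _
        simp only [hz x hx, hz y hy, le_refl]
    have hgb : ∀ i, ∀ lam ∈ Λ, phi (L i ω lam) ≤ b lam := fun i lam hlam =>
      hphimono (h2 i lam hlam)
    have hcboundΛ : ∀ j, ∀ lam ∈ Λ, c (T ω) j lam ≤ K := by
      intro j lam hlam
      simp only [hc]
      split_ifs with hcond
      · refine le_trans ?_ hcond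
        have h1' := Finset.single_le_sum (f := fun i => phi (T ω i lam))
          (fun i _ => hphinn _) (Finset.mem_univ j)
        have h2' : phi (T ω j lam) ≤ b lam := hgb j lam hlam
        linarith
      · exact hK0
    have hGbddA : ∀ j, BddAbove (Set.range fun q : ℚ => c (T ω) j (p q)) := by
      intro j
      refine ⟨K, ?_⟩
      rintro x ⟨q, rfl⟩
      exact hcboundΛ j (p q) (hpΛ q)
    have hGub : ∀ j, G j (T ω) ≤ K := by
      intro j
      simp only [hG]
      exact ciSup_le fun q => hcboundΛ j (p q) (hpΛ q)
    have hGlb : ∀ j, 0 ≤ G j (T ω) := by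
      intro j
      simp only [hG]
      exact le_trans (hcnn (T ω) j (p 0)) (le_ciSup (hGbddA j) (0 : ℚ))
    refine ⟨fun j => ⟨hGlb j, hGub j⟩, ?_, ?_⟩
    · -- the symmetrized sum bound
      by_contra hcon
      push_neg at hcon
      set Sg : ℝ := ∑ j, G j (T ω) with hSg
      set δ : ℝ := (Sg - K) / (2 * ((N : ℝ) + 1)) with hδ
      have hNpos : (0:ℝ) < (N : ℝ) + 1 := by positivity
      have hδpos : 0 < δ := by
        rw [hδ]
        apply div_pos (by linarith) (by positivity)
      have hex : ∀ j, ∃ q : ℚ, G j (T ω) - δ < c (T ω) j (p q) := by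
        intro j
        simp only [hG]
        exact exists_lt_of_lt_ciSup (sub_lt_self _ hδpos)
      choose qs hqs using hex
      set lamj : Fin (N + 1) → ℝ := fun j => p (qs j) with hlamj
      have hlamjΛ : ∀ j, lamj j ∈ Λ := fun j => hpΛ _
      have step1 : Sg ≤ (∑ j, c (T ω) j (lamj j)) + ((N : ℝ) + 1) * δ := by
        rw [hSg]
        have : ∀ j ∈ Finset.univ, G j (T ω) ≤ c (T ω) j (lamj j) + δ := by
          intro j _
          have := hqs j
          linarith
        calc ∑ j, G j (T ω) ≤ ∑ j : Fin (N + 1), (c (T ω) j (lamj j) + δ) :=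
              Finset.sum_le_sum this
          _ = (∑ j, c (T ω) j (lamj j)) + ((N : ℝ) + 1) * δ := by
              rw [Finset.sum_add_distrib, Finset.sum_const, Finset.card_univ,
                Fintype.card_fin]
              push_cast
              ring
      have step2 : ∑ j, c (T ω) j (lamj j) ≤ K := by
        set S : Finset (Fin (N + 1)) :=
          Finset.univ.filter (fun j => c (T ω) j (lamj j) ≠ 0) with hS
        have hsum_eq : ∑ j ∈ S, c (T ω) j (lamj j) = ∑ j, c (T ω) j (lamj j) :=
          Finset.sum_filter_ne_zero _
        rw [← hsum_eq]
        rcases S.eq_empty_or_nonempty with hSe | hSne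
        · rw [hSe, Finset.sum_empty]; exact hK0
        · obtain ⟨jst, hjstS, hjstmax⟩ := S.exists_max_image lamj hSne
          have hcondj : ∀ j ∈ S,
              b (lamj j) + ((∑ i, phi (T ω i (lamj j))) - phi (T ω j (lamj j))) ≤ K := by
            intro j hj
            by_contra hcc
            have : c (T ω) j (lamj j) = 0 := by
              simp only [hc]; rw [if_neg hcc]
            exact (Finset.mem_filter.1 hj).2 this
          have hval : ∀ j ∈ S, c (T ω) j (lamj j) = phi (L j ω (lamj j)) := by
            intro j hj
            simp only [hc]; rw [if_pos (hcondj j hj)]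
          calc ∑ j ∈ S, c (T ω) j (lamj j) = ∑ j ∈ S, phi (L j ω (lamj j)) :=
                Finset.sum_congr rfl hval
            _ ≤ ∑ j ∈ S, phi (L j ω (lamj jst)) := by
                refine Finset.sum_le_sum fun j hj => ?_
                exact hgmono j (hlamjΛ j) (hlamjΛ jst) (hjstmax j hj)
            _ ≤ ∑ j, phi (L j ω (lamj jst)) :=
                Finset.sum_le_sum_of_subset_of_nonneg (Finset.filter_subset _ _)
                  (fun j _ _ => hphinn _)
            _ ≤ K := by
                have hc1 := hcondj jst hjstS
                have hc2 : phi (L jst ω (lamj jst)) ≤ b (lamj jst) :=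
                  hgb jst (lamj jst) (hlamjΛ jst)
                have : ∀ i, T ω i (lamj jst) = L i ω (lamj jst) := fun i => rfl
                simp only [this] at hc1
                linarith
      rw [hδ] at step1
      have : ((N:ℝ) + 1) * ((Sg - K) / (2 * ((N : ℝ) + 1))) = (Sg - K) / 2 := by
        field_simp
      rw [this] at step1
      linarith
    · -- the left-continuity bound at lamHat
      have hhK : b (lamHat ω) +
          ((∑ i, phi (L i ω (lamHat ω))) - phi (L (Fin.last N) ω (lamHat ω))) ≤ K := by
        have h5' := h5
        rw [hdef ω (lamHat ω)] at h5'
        have hNpos : (0:ℝ) < (N : ℝ) + 1 := by positivity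
        rw [div_le_iff₀ hNpos] at h5'
        have e1 : ∑ i, phi (L i ω (lamHat ω)) =
            (∑ i : Fin N, phi (L i.castSucc ω (lamHat ω))) +
              phi (L (Fin.last N) ω (lamHat ω)) :=
          Fin.sum_univ_castSucc fun i => phi (L i ω (lamHat ω))
        have e2 : ∑ i : Fin N, (t + φbase (max (L i.castSucc ω (lamHat ω) - t) 0)) =
            (N : ℝ) * t + ∑ i : Fin N, phi (L i.castSucc ω (lamHat ω)) := by
          rw [Finset.sum_add_distrib, Finset.sum_const, Finset.card_univ,
            Fintype.card_fin, nsmul_eq_mul]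
        rw [e2] at h5'
        rw [e1, hK]
        have : φbase (max (B (lamHat ω) - t) 0) = b (lamHat ω) := rfl
        rw [this] at h5'
        nlinarith [h5']
      have hmonoh : MonotoneOn (fun lam =>
          b lam + ((∑ i, phi (L i ω lam)) - phi (L (Fin.last N) ω lam))) Λ := by
        have hrw : ∀ lam, b lam + ((∑ i, phi (L i ω lam)) - phi (L (Fin.last N) ω lam)) =
            b lam + ∑ i : Fin N, phi (L i.castSucc ω lam) := by
          intro lam
          rw [Fin.sum_univ_castSucc fun i => phi (L i ω lam)]
          ring
        intro x hx y hy hxy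
        dsimp only
        rw [hrw x, hrw y]
        exact add_le_add (hbmono hx hy hxy)
          (Finset.sum_le_sum fun i _ => hgmono i.castSucc hx hy hxy)
      have hseq : ∀ n : ℕ, ∃ q : ℚ, p q ≤ lamHat ω ∧ lamHat ω - 1 / ((n:ℝ) + 1) < p q :=
        fun n => hp_approx _ h4 (1 / ((n:ℝ) + 1)) (by positivity)
      choose qn hqn1 hqn2 using hseq
      have htendnhds : Filter.Tendsto (fun n => p (qn n)) Filter.atTop (nhds (lamHat ω)) := by
        have hlow : Filter.Tendsto (fun n : ℕ => lamHat ω - 1 / ((n:ℝ) + 1))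
            Filter.atTop (nhds (lamHat ω)) := by
          have := tendsto_one_div_add_atTop_nhds_zero_nat (𝕜 := ℝ)
          have := Filter.Tendsto.const_sub (lamHat ω) this
          simpa using this
        exact tendsto_of_tendsto_of_tendsto_of_le_of_le hlow tendsto_const_nhds
          (fun n => le_of_lt (hqn2 n)) (fun n => hqn1 n)
      have htend : Filter.Tendsto (fun n => p (qn n)) Filter.atTop
          (nhdsWithin (lamHat ω) (Λ ∩ Iic (lamHat ω))) := by
        apply tendsto_nhdsWithin_of_tendsto_nhds_of_eventually_within _ htendnhds
        exact Filter.Eventually.of_forall fun n => ⟨hpΛ (qn n), hqn1 n⟩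
      have hLcont := h3 (lamHat ω) h4
      have htphi : Filter.Tendsto (fun n => phi (L (Fin.last N) ω (p (qn n))))
          Filter.atTop (nhds (phi (L (Fin.last N) ω (lamHat ω)))) :=
        (hphicont.continuousAt.tendsto.comp (hLcont.tendsto.comp htend))
      refine le_of_tendsto htphi (Filter.Eventually.of_forall fun n => ?_)
      have hcond : b (p (qn n)) + ((∑ i, phi (T ω i (p (qn n)))) -
          phi (T ω (Fin.last N) (p (qn n)))) ≤ K :=
        le_trans (hmonoh (hpΛ (qn n)) h4 (hqn1 n)) hhK
      have hceq : c (T ω) (Fin.last N) (p (qn n)) =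
          phi (L (Fin.last N) ω (p (qn n))) := by
        simp only [hc]; rw [if_pos hcond]
      rw [← hceq]
      simp only [hG]
      exact le_ciSup (hGbddA (Fin.last N)) (qn n)
  -- integrability of the symmetrized functionals
  have hGint : ∀ j, Integrable (fun ω => G j (T ω)) ℙ := by
    intro j
    refine Integrable.mono' (integrable_const K) (((hGmeas j).comp hTmeas).aestronglyMeasurable) ?_
    filter_upwards [hmain] with ω hω
    rw [Real.norm_eq_abs, abs_le]
    exact ⟨by linarith [(hω.1 j).1, hK0], (hω.1 j).2⟩
  -- exchangeability: all the G j have the same expectation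
  have hGeq : ∀ j, ∫ ω, G j (T ω) ∂ℙ = ∫ ω, G (Fin.last N) (T ω) ∂ℙ := by
    intro j
    set σ : Equiv.Perm (Fin (N + 1)) := Equiv.swap j (Fin.last N) with hσ
    have hGswap : ∀ f : Fin (N + 1) → ℝ → ℝ, G (Fin.last N) (fun i => f (σ i)) = G j f := by
      intro f
      simp only [hG]
      congr 1
      funext q
      simp only [hc]
      have h1 : (∑ i, phi (f (σ i) (p q))) = ∑ i, phi (f i (p q)) :=
        Equiv.sum_comp σ fun i => phi (f i (p q))
      have h2 : σ (Fin.last N) = j := by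
        rw [hσ]; exact Equiv.swap_apply_right _ _
      rw [h1, h2]
    have hmeas2 : Measurable fun ω => (fun i => L (σ i) ω) :=
      measurable_pi_lambda _ fun i => hLmeas (σ i)
    calc ∫ ω, G j (T ω) ∂ℙ = ∫ ω, G (Fin.last N) (fun i => L (σ i) ω) ∂ℙ := by
          refine integral_congr_ae (Filter.Eventually.of_forall fun ω => ?_)
          exact (hGswap (T ω)).symm
      _ = ∫ f, G (Fin.last N) f ∂(Measure.map (fun ω => fun i => L (σ i) ω) ℙ) :=
          (integral_map hmeas2.aemeasurable ((hGmeas _).aestronglyMeasurable)).symm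
      _ = ∫ f, G (Fin.last N) f ∂(Measure.map T ℙ) := by
          rw [hExch σ]
      _ = ∫ ω, G (Fin.last N) (T ω) ∂ℙ :=
          integral_map hTmeas.aemeasurable ((hGmeas _).aestronglyMeasurable)
  -- the expectation bound
  have hGlastle : ∫ ω, G (Fin.last N) (T ω) ∂ℙ ≤ α - t := by
    have hsumle : ∑ j : Fin (N + 1), ∫ ω, G j (T ω) ∂ℙ ≤ K := by
      rw [← integral_finset_sum _ fun j _ => hGint j]
      have h1 : ∫ ω, ∑ j, G j (T ω) ∂ℙ ≤ ∫ _, K ∂ℙ := by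
        refine integral_mono_ae (integrable_finset_sum _ fun j _ => hGint j)
          (integrable_const K) ?_
        filter_upwards [hmain] with ω hω
        exact hω.2.1
      simpa using h1
    have h2 : ∑ j : Fin (N + 1), ∫ ω, G j (T ω) ∂ℙ =
        ((N : ℝ) + 1) * ∫ ω, G (Fin.last N) (T ω) ∂ℙ := by
      rw [Finset.sum_congr rfl fun j _ => hGeq j, Finset.sum_const, Finset.card_univ,
        Fintype.card_fin, nsmul_eq_mul]
      push_cast
      ring
    rw [h2, hK] at hsumle
    have hNpos : (0:ℝ) < (N : ℝ) + 1 := by positivity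
    exact le_of_mul_le_mul_left hsumle hNpos
  have hfinal1 : ∫ ω, phi (L (Fin.last N) ω (lamHat ω)) ∂ℙ ≤ α - t := by
    refine le_trans ?_ hGlastle
    refine integral_mono_ae (hIntφ t) (hGint _) ?_
    filter_upwards [hmain] with ω hω
    exact hω.2.2
  -- lower bound of the objective: needed for ciInf_le
  have hbddbelow : BddBelow (Set.range fun s : ℝ =>
      s + ∫ ω, φbase (max (L (Fin.last N) ω (lamHat ω) - s) 0) ∂ℙ) := by
    refine ⟨∫ ω, L (Fin.last N) ω (lamHat ω) ∂ℙ, ?_⟩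
    rintro x ⟨s, rfl⟩
    dsimp only
    have h1 : ∫ ω, (L (Fin.last N) ω (lamHat ω) - s) ∂ℙ ≤
        ∫ ω, φbase (max (L (Fin.last N) ω (lamHat ω) - s) 0) ∂ℙ :=
      integral_mono (hInt.sub (integrable_const s)) (hIntφ s)
        (fun ω => le_trans (le_max_left _ _) (hφsub _))
    rw [integral_sub hInt (integrable_const s), integral_const] at h1
    simp only [measure_univ, ENNReal.toReal_one, one_smul, probReal_univ, smul_eq_mul, one_mul] at h1
    linarith
  refine le_trans (ciInf_le hbddbelow t) ?_
  show t + ∫ ω, φbase (max (L (Fin.last N) ω (lamHat ω) - t) 0) ∂ℙ ≤ α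
  have heq : (fun ω => φbase (max (L (Fin.last N) ω (lamHat ω) - t) 0)) =
      fun ω => phi (L (Fin.last N) ω (lamHat ω)) := rfl
  rw [heq]
  linarith
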